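/- Let A, B ∈ M₂(ℂ), where A has distinct eigenvalues λ₁ ≠ λ₂ and B has distinct eigenvalues μ₁ ≠ μ₂. If (μ₁ − μ₂)/(λ₁ − λ₂) is a positive real number, then the pairing λ_j ↦ μ_j is a convex eigenpairing of A and B: there exists an eigenpath set {γ₁, γ₂} of the convex path α ↦ (1−α)A + αB with γ_j(0) = λ_j and γ_j(1) = μ_j for j = 1, 2. -/

import Mathlib

open Polynomial Set

section Helpers
open Complex Polynomial

noncomputable def csqrtR (x : ℝ) : ℂ :=
  if 0 ≤ x then (Real.sqrt x : ℂ) else Complex.I * Real.sqrt (-x)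

lemma continuous_csqrtR : Continuous csqrtR := by
  unfold csqrtR
  apply Continuous.if_le (by fun_prop) (by fun_prop) continuous_const continuous_id
  rintro x rfl
  simp

lemma csqrtR_sq (x : ℝ) : (csqrtR x) ^ 2 = x := by
  unfold csqrtR
  split_ifs with h
  · rw [← Complex.ofReal_pow, Real.sq_sqrt h]
  · rw [mul_pow, Complex.I_sq, ← Complex.ofReal_pow, Real.sq_sqrt (by linarith)]
    push_cast; ring

noncomputable def sqp (z : ℂ) (α : ℝ) : ℂ :=
  if z.im = 0 then csqrtR (α - z.re) else ((α : ℂ) - z) ^ ((1:ℂ)/2)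

lemma continuous_sqp (z : ℂ) : Continuous (sqp z) := by
  unfold sqp
  split_ifs with h
  · exact continuous_csqrtR.comp (by fun_prop)
  · rw [continuous_iff_continuousAt]
    intro x
    have h1 : ContinuousAt (fun w : ℂ => w ^ ((1:ℂ)/2)) ((x:ℂ) - z) := by
      apply continuousAt_cpow_const
      rw [Complex.mem_slitPlane_iff]
      right
      simpa using h
    have h2 : ContinuousAt (fun α : ℝ => (α:ℂ) - z) x := by fun_prop
    exact h2.cpow continuousAt_const (by rw [Complex.mem_slitPlane_iff]; right; simpa using h)

lemma sqp_sq (z : ℂ) (α : ℝ) : (sqp z α) ^ 2 = (α : ℂ) - z := by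
  unfold sqp
  split_ifs with him
  · rw [csqrtR_sq]
    apply Complex.ext <;> simp [him]
  · have hne : (α : ℂ) - z ≠ 0 := sub_ne_zero.mpr (by
      intro h; apply him; rw [← h]; simp)
    rw [sq, ← Complex.cpow_add _ _ hne]
    norm_num

lemma sqp_ne_zero (z : ℂ) (α : ℝ) (h : (α : ℂ) ≠ z) : sqp z α ≠ 0 := by
  intro h0
  have := sqp_sq z α
  rw [h0] at this
  simp at this
  exact h (by linear_combination -this)

lemma sqp_q_pos (z : ℂ) (hz : z.im ≠ 0 ∨ z.re < 0 ∨ 1 < z.re) :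
    0 < (sqp z 1 / sqp z 0).re := by
  have hz0 : ((0:ℝ):ℂ) ≠ z := by
    intro h; rcases hz with h'|h'|h' <;> rw [← h] at h' <;> simp at h' <;> linarith
  have hz1 : ((1:ℝ):ℂ) ≠ z := by
    intro h; rcases hz with h'|h'|h' <;> rw [← h] at h' <;> simp at h' <;> linarith
  have hn : sqp z 0 ≠ 0 := sqp_ne_zero _ _ hz0
  have key : 0 < (sqp z 1 * (starRingEnd ℂ) (sqp z 0)).re := by
    unfold sqp
    split_ifs with him
    · -- z real, z.re < 0 or 1 < z.re
      rcases hz with h'|h'|h'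
      · exact absurd him h'
      · unfold csqrtR
        rw [if_pos (by linarith : (0:ℝ) ≤ (1:ℝ) - z.re), if_pos (by linarith : (0:ℝ) ≤ (0:ℝ) - z.re)]
        rw [Complex.conj_ofReal, ← Complex.ofReal_mul, Complex.ofReal_re]
        exact mul_pos (Real.sqrt_pos.mpr (by linarith)) (Real.sqrt_pos.mpr (by linarith))
      · unfold csqrtR
        rw [if_neg (by linarith : ¬ (0:ℝ) ≤ (1:ℝ) - z.re), if_neg (by linarith : ¬ (0:ℝ) ≤ (0:ℝ) - z.re)]
        rw [map_mul, Complex.conj_I, Complex.conj_ofReal]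
        have e : ∀ x y : ℝ, (Complex.I * (x:ℂ) * (-Complex.I * (y:ℂ))).re = x * y := by
          intro x y
          simp [Complex.mul_re, Complex.mul_im]
        rw [e]
        exact mul_pos (Real.sqrt_pos.mpr (by linarith)) (Real.sqrt_pos.mpr (by linarith))
    · -- z.im ≠ 0
      have h1 : ((1:ℝ):ℂ) - z ≠ 0 := sub_ne_zero.mpr hz1
      have h0 : ((0:ℝ):ℂ) - z ≠ 0 := sub_ne_zero.mpr hz0
      rw [Complex.cpow_def_of_ne_zero h1, Complex.cpow_def_of_ne_zero h0,
        ← Complex.exp_conj, ← Complex.exp_add, Complex.exp_re]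
      apply mul_pos (Real.exp_pos _)
      apply Real.cos_pos_of_mem_Ioo
      have e1 : (Complex.log (((1:ℝ):ℂ) - z) * (1/2) +
          (starRingEnd ℂ) (Complex.log (((0:ℝ):ℂ) - z) * (1/2))).im
          = (Complex.arg (((1:ℝ):ℂ) - z) - Complex.arg (((0:ℝ):ℂ) - z)) / 2 := by
        simp [Complex.add_im, Complex.mul_im, Complex.log_im, Complex.conj_im, Complex.conj_re,
          Complex.log_re]
        ring
      rw [e1]
      have i1 : ((((1:ℝ)):ℂ) - z).im = -z.im := by simp
      have i0 : ((((0:ℝ)):ℂ) - z).im = -z.im := by simp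
      have pi_pos := Real.pi_pos
      rcases lt_or_gt_of_ne him with hneg | hpos
      · have a1 : 0 ≤ Complex.arg (((1:ℝ):ℂ) - z) :=
          Complex.arg_nonneg_iff.mpr (by rw [i1]; linarith)
        have a0 : 0 ≤ Complex.arg (((0:ℝ):ℂ) - z) :=
          Complex.arg_nonneg_iff.mpr (by rw [i0]; linarith)
        have b1 : Complex.arg (((1:ℝ):ℂ) - z) < Real.pi :=
          Complex.arg_lt_pi_iff.mpr (Or.inr (by rw [i1]; intro h; rw [neg_eq_zero] at h; exact him h))
        have b0 : Complex.arg (((0:ℝ):ℂ) - z) < Real.pi :=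
          Complex.arg_lt_pi_iff.mpr (Or.inr (by rw [i0]; intro h; rw [neg_eq_zero] at h; exact him h))
        exact Set.mem_Ioo.mpr ⟨by linarith, by linarith⟩
      · have a1 : Complex.arg (((1:ℝ):ℂ) - z) < 0 :=
          Complex.arg_neg_iff.mpr (by rw [i1]; linarith)
        have a0 : Complex.arg (((0:ℝ):ℂ) - z) < 0 :=
          Complex.arg_neg_iff.mpr (by rw [i0]; linarith)
        have b1 := Complex.neg_pi_lt_arg (((1:ℝ):ℂ) - z)
        have b0 := Complex.neg_pi_lt_arg (((0:ℝ):ℂ) - z)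
        exact Set.mem_Ioo.mpr ⟨by linarith, by linarith⟩
  have h2 : (sqp z 1 / sqp z 0).re
      = (sqp z 1 * (starRingEnd ℂ) (sqp z 0)).re / Complex.normSq (sqp z 0) := by
    rw [Complex.div_re, Complex.mul_re]
    simp only [Complex.conj_re, Complex.conj_im]
    ring
  rw [h2]
  exact div_pos key (Complex.normSq_pos.mpr hn)

lemma aux_re (p x q y : ℝ) (hp : 0 < p) (hq : 0 < q) (h : p * y + x * q = 0) :
    0 ≤ p * q - x * y := by
  have h2 : p * (p * q - x * y) = q * (p ^ 2 + x ^ 2) := by linear_combination (-x) * h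
  nlinarith [h2, mul_nonneg hq.le (by positivity : (0:ℝ) ≤ p ^ 2 + x ^ 2)]

lemma sq_cases {x y : ℂ} (h : x ^ 2 = y ^ 2) : x = y ∨ x = -y := by
  have h0 : (x - y) * (x + y) = 0 := by linear_combination h
  rcases mul_eq_zero.mp h0 with h' | h'
  · exact Or.inl (sub_eq_zero.mp h')
  · exact Or.inr (eq_neg_of_add_eq_zero_left h')

lemma exists_sqrt_path (a b : ℂ) (r : ℝ) (hr : 0 < r)
    (h1 : a + b + 1 = (r : ℂ) ^ 2) :
    ∃ u : ℝ → ℂ, Continuous u ∧ (∀ α : ℝ, (u α) ^ 2 = a * α ^ 2 + b * α + 1) ∧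
      u 0 = 1 ∧ u 1 = r := by
  have hf1 : a * ((1:ℝ):ℂ) ^ 2 + b * ((1:ℝ):ℂ) + 1 = (r:ℂ)^2 := by push_cast; linear_combination h1
  have hrne : (r:ℂ) ≠ 0 := by exact_mod_cast ne_of_gt hr
  -- Step 1
  have step1 : ∃ u : ℝ → ℂ, Continuous u ∧ (∀ α : ℝ, (u α) ^ 2 = a * α ^ 2 + b * α + 1) ∧
      u 0 = 1 ∧ (u 1 = r ∨ ∃ α₀ : ℝ, 0 < α₀ ∧ α₀ < 1 ∧
        a * (α₀:ℂ) ^ 2 + b * α₀ + 1 = 0) := by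
    by_cases ha : a = 0
    · by_cases hb : b = 0
      · -- constant case
        have hr1 : (r:ℂ) = 1 ∨ (r:ℂ) = -1 := sq_cases (by rw [← h1, ha, hb]; ring)
        have : (r:ℂ) = 1 := by
          rcases hr1 with h|h
          · exact h
          · exfalso; have : r = -1 := by exact_mod_cast h
            linarith
        refine ⟨fun _ => 1, continuous_const, ?_, rfl, Or.inl this.symm⟩
        intro α; rw [ha, hb]; ring
      · -- linear case
        set z : ℂ := -1/b with hzdef
        have hfac : ∀ x : ℂ, b * (x - z) = a * x ^ 2 + b * x + 1 := by
          intro x; rw [ha, hzdef]; field_simp; ring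
        obtain ⟨w, hw2⟩ := IsAlgClosed.exists_pow_nat_eq b (by norm_num : 0 < 2)
        have hf0 : a * ((0:ℝ):ℂ) ^ 2 + b * ((0:ℝ):ℂ) + 1 = 1 := by push_cast; ring
        have hz0 : ((0:ℝ):ℂ) ≠ z := by
          intro h; have := hfac ((0:ℝ):ℂ); rw [← h, sub_self, mul_zero, hf0] at this
          exact one_ne_zero this.symm
        have hz1 : ((1:ℝ):ℂ) ≠ z := by
          intro h; have := hfac ((1:ℝ):ℂ); rw [← h, sub_self, mul_zero, hf1] at this
          exact (pow_ne_zero 2 hrne) this.symm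
        set u₁ : ℝ → ℂ := fun α => w * sqp z α with hu₁def
        have hu₁sq : ∀ α : ℝ, (u₁ α) ^ 2 = a * α ^ 2 + b * α + 1 := by
          intro α
          rw [hu₁def]; rw [← hfac]
          rw [mul_pow, hw2, sqp_sq]
        set c : ℂ := u₁ 0 with hcdef
        have hc2 : c ^ 2 = 1 := by rw [hcdef, hu₁sq]; exact hf0
        set u : ℝ → ℂ := fun α => c * u₁ α with hudef
        have hcont : Continuous u := by
          apply continuous_const.mul (continuous_const.mul (continuous_sqp z))
        have husq : ∀ α : ℝ, (u α) ^ 2 = a * α ^ 2 + b * α + 1 := by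
          intro α; rw [hudef]; simp only; rw [mul_pow, hc2, one_mul]; exact hu₁sq α
        have hu0 : u 0 = 1 := by rw [hudef]; simp only; rw [← hcdef, ← sq, hc2]
        refine ⟨u, hcont, husq, hu0, ?_⟩
        by_cases hzin : z.im = 0 ∧ 0 ≤ z.re ∧ z.re ≤ 1
        · right
          refine ⟨z.re, ?_, ?_, ?_⟩
          · rcases lt_or_eq_of_le hzin.2.1 with h|h
            · exact h
            · exfalso; apply hz0; apply Complex.ext <;> simp [hzin.1, ← h]
          · rcases lt_or_eq_of_le hzin.2.2 with h|h
            · exact h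
            · exfalso; apply hz1; apply Complex.ext <;> simp [hzin.1, h]
          · rw [← hfac]
            have : ((z.re:ℝ):ℂ) = z := by apply Complex.ext <;> simp [hzin.1]
            rw [this, sub_self, mul_zero]
        · left
          push_neg at hzin
          have hcond : z.im ≠ 0 ∨ z.re < 0 ∨ 1 < z.re := by
            by_cases h : z.im = 0
            · right
              rcases lt_or_ge z.re 0 with h'|h'
              · exact Or.inl h'
              · exact Or.inr (lt_of_not_ge fun hc => absurd (hzin h h') (by simp [hc]))
            · exact Or.inl h
          set q : ℂ := sqp z 1 / sqp z 0 with hqdef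
          have hqpos : 0 < q.re := sqp_q_pos z hcond
          have hs0 : sqp z 0 ≠ 0 := sqp_ne_zero z 0 hz0
          have hq1 : sqp z 1 = q * sqp z 0 := (div_mul_cancel₀ _ hs0).symm
          have hu1 : u 1 = q := by
            rw [hudef]; simp only; rw [hu₁def]; simp only
            rw [hq1]
            have h00 : c * (w * sqp z 0) = 1 := hu0
            linear_combination q * h00
          have : (u 1) ^ 2 = (r:ℂ)^2 := by rw [husq 1]; exact hf1
          rcases sq_cases this with h|h
          · exact h
          · exfalso
            rw [hu1] at h
            have him : q.im * 1 = 0 := by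
              have := congrArg Complex.im h; simpa using this
            have hre : q.re = -r := by
              have := congrArg Complex.re h; simpa using this
            rw [hre] at hqpos; linarith
    · -- quadratic case
      obtain ⟨w, hw2⟩ := IsAlgClosed.exists_pow_nat_eq (b ^ 2 - 4 * a) (by norm_num : 0 < 2)
      obtain ⟨v, hv2⟩ := IsAlgClosed.exists_pow_nat_eq a (by norm_num : 0 < 2)
      set z₁ : ℂ := (-b + w) / (2 * a) with hz₁def
      set z₂ : ℂ := (-b - w) / (2 * a) with hz₂def
      have hs' : a * (z₁ + z₂) = -b := by rw [hz₁def, hz₂def]; field_simp; ring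
      have hp' : a * (z₁ * z₂) = 1 := by
        rw [hz₁def, hz₂def]; field_simp; linear_combination -hw2
      have hfac : ∀ x : ℂ, a * (x - z₁) * (x - z₂) = a * x ^ 2 + b * x + 1 := by
        intro x; linear_combination (-x) * hs' + hp'
      have hf0 : a * ((0:ℝ):ℂ) ^ 2 + b * ((0:ℝ):ℂ) + 1 = 1 := by push_cast; ring
      have hz0₁ : ((0:ℝ):ℂ) ≠ z₁ := by
        intro h; have := hfac ((0:ℝ):ℂ); rw [← h, sub_self, mul_zero, zero_mul, hf0] at this
        exact one_ne_zero this.symm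
      have hz0₂ : ((0:ℝ):ℂ) ≠ z₂ := by
        intro h; have := hfac ((0:ℝ):ℂ); rw [← h, sub_self, mul_zero, hf0] at this
        exact one_ne_zero this.symm
      have hz1₁ : ((1:ℝ):ℂ) ≠ z₁ := by
        intro h; have := hfac ((1:ℝ):ℂ); rw [← h, sub_self, mul_zero, zero_mul, hf1] at this
        exact (pow_ne_zero 2 hrne) this.symm
      have hz1₂ : ((1:ℝ):ℂ) ≠ z₂ := by
        intro h; have := hfac ((1:ℝ):ℂ); rw [← h, sub_self, mul_zero, hf1] at this
        exact (pow_ne_zero 2 hrne) this.symm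
      set u₁ : ℝ → ℂ := fun α => v * sqp z₁ α * sqp z₂ α with hu₁def
      have hu₁sq : ∀ α : ℝ, (u₁ α) ^ 2 = a * α ^ 2 + b * α + 1 := by
        intro α
        rw [hu₁def]; simp only
        rw [← hfac, mul_pow, mul_pow, hv2, sqp_sq, sqp_sq]
      set c : ℂ := u₁ 0 with hcdef
      have hc2 : c ^ 2 = 1 := by rw [hcdef, hu₁sq]; exact hf0
      set u : ℝ → ℂ := fun α => c * u₁ α with hudef
      have hcont : Continuous u := by
        apply continuous_const.mul
        exact (continuous_const.mul (continuous_sqp z₁)).mul (continuous_sqp z₂)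
      have husq : ∀ α : ℝ, (u α) ^ 2 = a * α ^ 2 + b * α + 1 := by
        intro α; rw [hudef]; simp only; rw [mul_pow, hc2, one_mul]; exact hu₁sq α
      have hu0 : u 0 = 1 := by rw [hudef]; simp only; rw [← hcdef, ← sq, hc2]
      refine ⟨u, hcont, husq, hu0, ?_⟩
      by_cases hzin₁ : z₁.im = 0 ∧ 0 ≤ z₁.re ∧ z₁.re ≤ 1
      · right
        refine ⟨z₁.re, ?_, ?_, ?_⟩
        · rcases lt_or_eq_of_le hzin₁.2.1 with h|h
          · exact h
          · exfalso; apply hz0₁; apply Complex.ext <;> simp [hzin₁.1, ← h]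
        · rcases lt_or_eq_of_le hzin₁.2.2 with h|h
          · exact h
          · exfalso; apply hz1₁; apply Complex.ext <;> simp [hzin₁.1, h]
        · rw [← hfac]
          have : ((z₁.re:ℝ):ℂ) = z₁ := by apply Complex.ext <;> simp [hzin₁.1]
          rw [this, sub_self, mul_zero, zero_mul]
      · by_cases hzin₂ : z₂.im = 0 ∧ 0 ≤ z₂.re ∧ z₂.re ≤ 1
        · right
          refine ⟨z₂.re, ?_, ?_, ?_⟩
          · rcases lt_or_eq_of_le hzin₂.2.1 with h|h
            · exact h
            · exfalso; apply hz0₂; apply Complex.ext <;> simp [hzin₂.1, ← h]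
          · rcases lt_or_eq_of_le hzin₂.2.2 with h|h
            · exact h
            · exfalso; apply hz1₂; apply Complex.ext <;> simp [hzin₂.1, h]
          · rw [← hfac]
            have : ((z₂.re:ℝ):ℂ) = z₂ := by apply Complex.ext <;> simp [hzin₂.1]
            rw [this, sub_self, mul_zero]
        · left
          push_neg at hzin₁ hzin₂
          have hcond₁ : z₁.im ≠ 0 ∨ z₁.re < 0 ∨ 1 < z₁.re := by
            by_cases h : z₁.im = 0
            · right
              rcases lt_or_ge z₁.re 0 with h'|h'
              · exact Or.inl h'
              · exact Or.inr (lt_of_not_ge fun hc => absurd (hzin₁ h h') (by simp [hc]))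
            · exact Or.inl h
          have hcond₂ : z₂.im ≠ 0 ∨ z₂.re < 0 ∨ 1 < z₂.re := by
            by_cases h : z₂.im = 0
            · right
              rcases lt_or_ge z₂.re 0 with h'|h'
              · exact Or.inl h'
              · exact Or.inr (lt_of_not_ge fun hc => absurd (hzin₂ h h') (by simp [hc]))
            · exact Or.inl h
          set q₁ : ℂ := sqp z₁ 1 / sqp z₁ 0 with hq₁def
          set q₂ : ℂ := sqp z₂ 1 / sqp z₂ 0 with hq₂def
          have hq₁pos : 0 < q₁.re := sqp_q_pos z₁ hcond₁
          have hq₂pos : 0 < q₂.re := sqp_q_pos z₂ hcond₂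
          have hs0₁ : sqp z₁ 0 ≠ 0 := sqp_ne_zero z₁ 0 hz0₁
          have hs0₂ : sqp z₂ 0 ≠ 0 := sqp_ne_zero z₂ 0 hz0₂
          have hq1₁ : sqp z₁ 1 = q₁ * sqp z₁ 0 := (div_mul_cancel₀ _ hs0₁).symm
          have hq1₂ : sqp z₂ 1 = q₂ * sqp z₂ 0 := (div_mul_cancel₀ _ hs0₂).symm
          have hu1 : u 1 = q₁ * q₂ := by
            show c * (v * sqp z₁ 1 * sqp z₂ 1) = q₁ * q₂
            rw [hq1₁, hq1₂]
            have h00 : c * (v * sqp z₁ 0 * sqp z₂ 0) = 1 := hu0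
            linear_combination q₁ * q₂ * h00
          have hsq : (u 1) ^ 2 = (r:ℂ) ^ 2 := by rw [husq 1]; exact hf1
          rcases sq_cases hsq with h|h
          · exact h
          · exfalso
            rw [hu1] at h
            have him' : q₁.re * q₂.im + q₁.im * q₂.re = 0 := by
              have := congrArg Complex.im h
              simpa [Complex.mul_im] using this
            have hre' : q₁.re * q₂.re - q₁.im * q₂.im = -r := by
              have := congrArg Complex.re h
              simpa [Complex.mul_re] using this
            have := aux_re q₁.re q₁.im q₂.re q₂.im hq₁pos hq₂pos him'
            rw [hre'] at this
            linarith
  -- Step 2: handle the swap case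
  obtain ⟨u, hcont, husq, hu0, hend⟩ := step1
  rcases hend with h | ⟨α₀, hα0, hα1, hfz⟩
  · exact ⟨u, hcont, husq, hu0, h⟩
  · rcases sq_cases (show (u 1) ^ 2 = ((r:ℂ)) ^ 2 by rw [husq 1]; exact hf1) with h | h
    · exact ⟨u, hcont, husq, hu0, h⟩
    · have hu₀0 : u α₀ = 0 := by
        have h2 : (u α₀) ^ 2 = 0 := by rw [husq α₀]; exact hfz
        exact pow_eq_zero_iff (by norm_num) |>.mp h2
      refine ⟨fun α => if α ≤ α₀ then u α else -u α, ?_, ?_, ?_, ?_⟩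
      · apply Continuous.if_le hcont hcont.neg continuous_id continuous_const
        intro x hx
        rw [show x = α₀ from hx, Pi.neg_apply, hu₀0, neg_zero]
      · intro α
        simp only
        split_ifs
        · exact husq α
        · rw [show (-u α) ^ 2 = (u α) ^ 2 by ring]; exact husq α
      · simp only
        rw [if_pos (le_of_lt hα0)]
        exact hu0
      · simp only
        rw [if_neg (by linarith), h]
        ring

lemma charpoly_fin_two' (M : Matrix (Fin 2) (Fin 2) ℂ) :
    M.charpoly = X ^ 2 - C (Matrix.trace M) * X + C M.det := by
  rw [Matrix.charpoly, Matrix.det_fin_two]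
  rw [Matrix.charmatrix_apply_eq, Matrix.charmatrix_apply_eq,
    Matrix.charmatrix_apply_ne _ _ _ (by decide), Matrix.charmatrix_apply_ne _ _ _ (by decide),
    Matrix.trace_fin_two, Matrix.det_fin_two]
  simp only [map_add, map_sub, map_mul]
  ring

lemma roots_quad (s p x y : ℂ) (hs : x + y = s) (hp : x * y = p) :
    (X ^ 2 - C s * X + C p).roots = {x, y} := by
  have hfac : X ^ 2 - C s * X + C p = (X - C x) * (X - C y) := by
    rw [← hs, ← hp]
    simp only [map_add, map_mul]
    ring
  rw [hfac, Polynomial.roots_mul, Polynomial.roots_X_sub_C, Polynomial.roots_X_sub_C]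
  · rfl
  · exact mul_ne_zero (Polynomial.X_sub_C_ne_zero x) (Polynomial.X_sub_C_ne_zero y)

-- trace/det from roots of charpoly
lemma trace_det_of_roots (M : Matrix (Fin 2) (Fin 2) ℂ) (x y : ℂ) (hxy : x ≠ y)
    (h : M.charpoly.roots = {x, y}) :
    Matrix.trace M = x + y ∧ M.det = x * y := by
  have hmon := M.charpoly_monic
  have hne : M.charpoly ≠ 0 := hmon.ne_zero
  have hx : M.charpoly.IsRoot x := Polynomial.isRoot_of_mem_roots (by rw [h]; simp)
  have hy : M.charpoly.IsRoot y := Polynomial.isRoot_of_mem_roots (by rw [h]; simp)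
  rw [charpoly_fin_two'] at hx hy
  simp only [Polynomial.IsRoot, Polynomial.eval_add, Polynomial.eval_sub, Polynomial.eval_pow,
    Polynomial.eval_mul, Polynomial.eval_C, Polynomial.eval_X] at hx hy
  have hd : x - y ≠ 0 := sub_ne_zero.mpr hxy
  have ht : Matrix.trace M = x + y := by
    have h2 : (x - y) * (x + y - Matrix.trace M) = 0 := by linear_combination hx - hy
    rcases mul_eq_zero.mp h2 with h'|h'
    · exact absurd h' hd
    · linear_combination -h'
  refine ⟨ht, ?_⟩
  rw [ht] at hx
  linear_combination hx

lemma det_conv (A B : Matrix (Fin 2) (Fin 2) ℂ) (α : ℝ) :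
    (((1 - α : ℝ) : ℂ) • A + (α : ℂ) • B).det =
      (1 - (α:ℂ)) ^ 2 * A.det + (α:ℂ) ^ 2 * B.det +
      (α:ℂ) * (1 - (α:ℂ)) *
        (A 0 0 * B 1 1 + B 0 0 * A 1 1 - A 0 1 * B 1 0 - B 0 1 * A 1 0) := by
  rw [Matrix.det_fin_two, Matrix.det_fin_two, Matrix.det_fin_two]
  simp only [Matrix.add_apply, Matrix.smul_apply, smul_eq_mul]
  push_cast
  ring

lemma trace_conv (A B : Matrix (Fin 2) (Fin 2) ℂ) (α : ℝ) :
    Matrix.trace (((1 - α : ℝ) : ℂ) • A + (α : ℂ) • B) =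
      (1 - (α:ℂ)) * Matrix.trace A + (α:ℂ) * Matrix.trace B := by
  rw [Matrix.trace_add, Matrix.trace_smul, Matrix.trace_smul]
  push_cast
  simp [smul_eq_mul]

end Helpers

def IsEigenpathSet (n : ℕ) (C : ℝ → Matrix (Fin n) (Fin n) ℂ) (γ : Fin n → ℝ → ℂ) : Prop :=
  (∀ j, ContinuousOn (γ j) (Set.Icc 0 1)) ∧
  ∀ α ∈ Set.Icc (0 : ℝ) 1,
    (Finset.univ.val.map fun j => γ j α) = (Matrix.charpoly (C α)).roots

theorem identity_pairing_of_pos_real_ratio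
    (A B : Matrix (Fin 2) (Fin 2) ℂ) (lam₁ lam₂ mu₁ mu₂ : ℂ)
    (hA : (Matrix.charpoly A).roots = {lam₁, lam₂}) (hlam : lam₁ ≠ lam₂)
    (hB : (Matrix.charpoly B).roots = {mu₁, mu₂}) (hmu : mu₁ ≠ mu₂)
    (hratio : ∃ r : ℝ, 0 < r ∧ (mu₁ - mu₂) / (lam₁ - lam₂) = (r : ℂ)) :
    ∃ γ : Fin 2 → ℝ → ℂ,
      IsEigenpathSet 2 (fun α => ((1 - α : ℝ) : ℂ) • A + (α : ℂ) • B) γ ∧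
      γ 0 0 = lam₁ ∧ γ 1 0 = lam₂ ∧ γ 0 1 = mu₁ ∧ γ 1 1 = mu₂ := by
  obtain ⟨r, hr, hrat⟩ := hratio
  have hδ : lam₁ - lam₂ ≠ 0 := sub_ne_zero.mpr hlam
  rw [div_eq_iff hδ] at hrat
  obtain ⟨htA, hdA⟩ := trace_det_of_roots A lam₁ lam₂ hlam hA
  obtain ⟨htB, hdB⟩ := trace_det_of_roots B mu₁ mu₂ hmu hB
  set δ : ℂ := lam₁ - lam₂ with hδdef
  set m : ℂ := A 0 0 * B 1 1 + B 0 0 * A 1 1 - A 0 1 * B 1 0 - B 0 1 * A 1 0 with hmdef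
  set K : ℂ := Matrix.trace A * Matrix.trace B - 2 * m with hKdef
  set a : ℂ := 1 + (r:ℂ) ^ 2 - 2 * K / δ ^ 2 with hadef
  set b : ℂ := 2 * K / δ ^ 2 - 2 with hbdef
  have h1 : a + b + 1 = (r:ℂ) ^ 2 := by rw [hadef, hbdef]; ring
  obtain ⟨u, hucont, husq, hu0, hu1⟩ := exists_sqrt_path a b r hr h1
  have ha' : δ ^ 2 * a = δ ^ 2 * (1 + (r:ℂ) ^ 2) - 2 * K := by
    rw [hadef]; field_simp
  have hb' : δ ^ 2 * b = 2 * K - 2 * δ ^ 2 := by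
    rw [hbdef]; field_simp
  set t : ℝ → ℂ := fun α => (1 - (α:ℂ)) * Matrix.trace A + (α:ℂ) * Matrix.trace B with htdef
  have hkey : ∀ α : ℝ, (t α) ^ 2 - 4 * ((((1 - α : ℝ) : ℂ)) • A + (α : ℂ) • B).det
      = δ ^ 2 * (a * (α:ℂ) ^ 2 + b * α + 1) := by
    intro α
    have hexp : δ ^ 2 * (a * (α:ℂ) ^ 2 + b * α + 1)
        = (δ ^ 2 * a) * (α:ℂ) ^ 2 + (δ ^ 2 * b) * α + δ ^ 2 := by ring
    rw [hexp, ha', hb', det_conv, htdef]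
    simp only
    rw [← hmdef, hKdef, htA, htB, hdA, hdB]
    linear_combination ((α:ℂ)) ^ 2 * (mu₁ - mu₂ + (r:ℂ) * δ) * hrat
  set γ : Fin 2 → ℝ → ℂ :=
    ![fun α => (t α + δ * u α) / 2, fun α => (t α - δ * u α) / 2] with hγdef
  have hγ0 : ∀ α, γ 0 α = (t α + δ * u α) / 2 := fun α => rfl
  have hγ1 : ∀ α, γ 1 α = (t α - δ * u α) / 2 := fun α => rfl
  have hcontt : Continuous t := by
    rw [htdef]; fun_prop
  refine ⟨γ, ⟨?_, ?_⟩, ?_, ?_, ?_, ?_⟩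
  · intro j
    fin_cases j
    · exact (((hcontt.add (continuous_const.mul hucont)).div_const 2)).continuousOn
    · exact (((hcontt.sub (continuous_const.mul hucont)).div_const 2)).continuousOn
  · intro α hα
    have hs : γ 0 α + γ 1 α = Matrix.trace (((1 - α : ℝ) : ℂ) • A + (α : ℂ) • B) := by
      rw [hγ0, hγ1, trace_conv]
      show _ = t α
      ring
    have hp : γ 0 α * γ 1 α = (((1 - α : ℝ) : ℂ) • A + (α : ℂ) • B).det := by
      rw [hγ0, hγ1]
      have h2 := hkey α
      have h3 := husq α
      linear_combination (1/4) * h2 - (δ ^ 2 / 4) * h3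
    show _ = (Matrix.charpoly ((((1 - α : ℝ) : ℂ)) • A + (α : ℂ) • B)).roots
    rw [charpoly_fin_two',
      roots_quad (Matrix.trace (((1 - α : ℝ) : ℂ) • A + (α : ℂ) • B))
        ((((1 - α : ℝ) : ℂ) • A + (α : ℂ) • B).det) (γ 0 α) (γ 1 α) hs hp]
    rfl
  · rw [hγ0, hu0, htdef]
    simp only [Complex.ofReal_zero]
    rw [htA]
    ring_nf
    rw [hδdef]; ring
  · rw [hγ1, hu0, htdef]
    simp only [Complex.ofReal_zero]
    rw [htA]
    ring_nf
    rw [hδdef]; ring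
  · rw [hγ0, hu1, htdef]
    simp only [Complex.ofReal_one]
    rw [htB]
    linear_combination (-1/2) * hrat
  · rw [hγ1, hu1, htdef]
    simp only [Complex.ofReal_one]
    rw [htB]
    linear_combination (1/2) * hrat
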